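/- Let A be a group with subgroups H, K and isomorphism θ : H → K, and suppose there is a ∈ A \ H with a⁻¹ H a ∩ K = {1}. In the HNN extension G = HNN(A, H, K, θ) with stable letter w, the subgroup generated by a and w contains a nonabelian free subgroup; in particular, ⟨a, w⟩ is not amenable when the reduced words involving genuine pinch-free alternations are all nontrivial. -/

import Mathlib

open HNNExtension

section Stmt11Aux

variable {G : Type*} [Group G] {A B : Subgroup G}

/-- Head value of each symbol. Symbols are `(generator, sign)` with generators
`X` (`true`) and `Y` (`false`). -/
def s11hd (a d : G) : Bool × Bool → G
  | (true, _) => 1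
  | (false, true) => d
  | (false, false) => a⁻¹

/-- The list of `(ℤˣ × G)` pairs contributed by each symbol, where `h` is the head value
of the next symbol (or `1`). -/
def s11pairs (a d : G) : Bool × Bool → G → List (ℤˣ × G)
  | (true, true), h => [(1, 1), (1, h)]
  | (true, false), h => [(-1, 1), (-1, h)]
  | (false, true), h => [(1, 1), (1, a * h)]
  | (false, false), h => [(-1, 1), (-1, d⁻¹ * h)]

/-- Build the reduced-word list for a word in the two generators. -/
def s11build (a d : G) : List (Bool × Bool) → List (ℤˣ × G)
  | [] => []
  | [σ] => s11pairs a d σ 1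
  | σ :: τ :: L => s11pairs a d σ (s11hd a d τ) ++ s11build a d (τ :: L)

variable (φ : A ≃* B)

/-- The two generators of the free subgroup: `X = t * t` and `Y = of d * (t * t * of a)`. -/
def s11gen (a d : G) : Bool → HNNExtension G A B φ :=
  fun b => if b then t * t else of d * (t * t * of a)

/-- Product of a list of pairs, as in `HNNExtension.ReducedWord.prod`. -/
def s11P (l : List (ℤˣ × G)) : HNNExtension G A B φ :=
  (l.map fun x => t ^ (x.1 : ℤ) * of x.2).prod

theorem s11pairs_prod (a d : G) (σ : Bool × Bool) (h : G) :
    of (s11hd a d σ) * s11P φ (s11pairs a d σ h)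
      = (cond σ.2 (s11gen φ a d σ.1) (s11gen φ a d σ.1)⁻¹) * of h := by
  rcases σ with ⟨g, s⟩
  cases g <;> cases s <;>
    simp [s11hd, s11pairs, s11P, s11gen, mul_assoc, zpow_neg, map_mul, map_inv,
      mul_inv_rev]

theorem s11build_head? (a d : G) : ∀ (L : List (Bool × Bool)) (σ : Bool × Bool),
    (s11build a d (σ :: L)).head? = some ((if σ.2 then 1 else -1 : ℤˣ), (1 : G)) := by
  intro L σ
  rcases σ with ⟨g, s⟩
  rcases L with _ | ⟨τ, L⟩ <;> cases g <;> cases s <;> rfl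

theorem s11prod (a d : G) : ∀ (L : List (Bool × Bool)) (σ : Bool × Bool),
    of (s11hd a d σ) * s11P φ (s11build a d (σ :: L)) =
      ((σ :: L).map fun x => cond x.2 (s11gen φ a d x.1) (s11gen φ a d x.1)⁻¹).prod := by
  intro L
  induction L with
  | nil =>
    intro σ
    have h1 := s11pairs_prod φ a d σ 1
    simp only [map_one, mul_one] at h1
    simpa [s11build] using h1
  | cons τ L ih =>
    intro σ
    have hP : s11P φ (s11build a d (σ :: τ :: L)) =
        s11P φ (s11pairs a d σ (s11hd a d τ)) * s11P φ (s11build a d (τ :: L)) := by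
      show s11P φ (s11pairs a d σ (s11hd a d τ) ++ s11build a d (τ :: L)) = _
      simp [s11P]
    rw [List.map_cons, List.prod_cons, ← ih τ, hP, ← mul_assoc, s11pairs_prod φ a d σ,
      mul_assoc]

theorem s11chain (a d : G) (haA : a ∉ A) (hdB : d ∉ B) :
    ∀ (L : List (Bool × Bool)) (σ : Bool × Bool),
    List.Chain' (fun p q : Bool × Bool => p.1 = q.1 → q.2 = p.2) (σ :: L) →
    List.Chain' (fun p q : ℤˣ × G => p.2 ∈ toSubgroup A B p.1 → p.1 = q.1)
      (s11build a d (σ :: L)) := by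
  intro L
  induction L with
  | nil =>
    intro σ _
    rcases σ with ⟨g, s⟩
    cases g <;> cases s <;> simp [List.Chain', s11build, s11pairs]
  | cons τ L ih =>
    intro σ hred
    rw [List.Chain', List.isChain_cons_cons] at hred
    obtain ⟨hredhead, hredtail⟩ := hred
    show List.Chain' _ (s11pairs a d σ (s11hd a d τ) ++ s11build a d (τ :: L))
    rw [List.Chain', List.isChain_append]
    refine ⟨?_, ih τ hredtail, ?_⟩
    · rcases σ with ⟨g, s⟩
      cases g <;> cases s <;> simp [s11pairs]
    · intro x hx y hy
      rw [s11build_head? a d L τ] at hy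
      cases hy
      rcases σ with ⟨g, s⟩
      rcases τ with ⟨g', s'⟩
      have haA' : a⁻¹ ∉ A := fun hm => haA (by simpa using A.inv_mem hm)
      have hdB' : d⁻¹ ∉ B := fun hm => hdB (by simpa using B.inv_mem hm)
      cases g <;> cases s <;> cases g' <;> cases s' <;>
        simp only [s11pairs, s11hd, List.getLast?_cons_cons, List.getLast?_singleton,
          Option.mem_def, Option.some.injEq] at hx <;>
        cases hx <;>
        intro hmem <;>
        first
          | rfl
          | (exact absurd (hredhead rfl) (by simp))
          | (exact absurd (by simpa using hmem) haA)
          | (exact absurd (by simpa using hmem) haA')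
          | (exact absurd (by simpa using hmem) hdB)
          | (exact absurd (by simpa using hmem) hdB')
  
theorem s11rd_aux : ∀ (L : List (Bool × Bool)),
    (∀ (L₂ : List (Bool × Bool)) (x : Bool) (b : Bool) (L₃ : List (Bool × Bool)),
      L ≠ L₂ ++ (x, b) :: (x, !b) :: L₃) →
    List.Chain' (fun p q : Bool × Bool => p.1 = q.1 → q.2 = p.2) L := by
  intro L
  induction L with
  | nil => intro _; simp [List.Chain']
  | cons σ L ih =>
    intro H
    rcases L with _ | ⟨τ, L'⟩
    · simp [List.Chain']
    · rw [List.Chain', List.isChain_cons_cons]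
      constructor
      · intro h1
        by_contra h2
        have hτ : τ = (σ.1, !σ.2) := by
          rcases τ with ⟨τ1, τ2⟩
          rcases σ with ⟨σ1, σ2⟩
          simp_all
          cases σ2 <;> cases τ2 <;> simp_all
        exact H [] σ.1 σ.2 L' (by rw [List.nil_append, hτ])
      · refine ih ?_
        intro L₂ x b L₃ hEq
        exact H (σ :: L₂) x b L₃ (by rw [hEq]; rfl)

theorem s11rd (w : FreeGroup Bool) :
    List.Chain' (fun p q : Bool × Bool => p.1 = q.1 → q.2 = p.2) w.toWord := by
  apply s11rd_aux
  intro L₂ x b L₃ hEq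
  have : FreeGroup.reduce w.toWord = L₂ ++ (x, b) :: (x, !b) :: L₃ := by
    rw [FreeGroup.reduce_toWord, hEq]
  exact FreeGroup.reduce.not this

theorem s11nontriv (a d : G) (haA : a ∉ A) (hdB : d ∉ B) (w : FreeGroup Bool)
    (hw : w ≠ 1) : FreeGroup.lift (s11gen φ a d) w ≠ 1 := by
  intro hcon
  have hL : w.toWord ≠ [] := fun h => hw (FreeGroup.toWord_eq_nil_iff.mp h)
  obtain ⟨σ, L, hLw⟩ : ∃ σ L, w.toWord = σ :: L := by
    rcases h : w.toWord with _ | ⟨σ, L⟩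
    · exact absurd h hL
    · exact ⟨σ, L, rfl⟩
  have hrd := s11rd w
  rw [hLw] at hrd
  let R : NormalWord.ReducedWord G A B :=
    ⟨s11hd a d σ, s11build a d (σ :: L), s11chain a d haA hdB L σ hrd⟩
  have hprod : R.prod φ = FreeGroup.lift (s11gen φ a d) w := by
    have : FreeGroup.lift (s11gen φ a d) w
        = FreeGroup.lift (s11gen φ a d) (FreeGroup.mk w.toWord) := by
      rw [FreeGroup.mk_toWord]
    rw [this, FreeGroup.lift_mk, hLw]
    show of (s11hd a d σ) * s11P φ (s11build a d (σ :: L)) = _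
    rw [s11prod]
  have hrange : R.prod φ ∈ (of.range : Subgroup (HNNExtension G A B φ)) :=
    ⟨1, by rw [map_one, hprod, hcon]⟩
  have hnil := ReducedWord.toList_eq_nil_of_mem_of_range φ R hrange
  have := s11build_head? a d L σ
  rw [show s11build a d (σ :: L) = R.toList from rfl, hnil] at this
  simp at this

end Stmt11Aux

/-- Let `G` be a group with subgroups `A`, `B` and `φ : A ≃* B`, and suppose `a ∈ G \ A`
satisfies `a⁻¹ A a ∩ B = {1}`. Then in `HNNExtension G A B φ` with stable letter `t`, the
subgroup generated by `a` and `t` contains a nonabelian free subgroup (a copy of the free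
group on two generators). -/
theorem stmt11 {G : Type*} [Group G] {A B : Subgroup G} (φ : A ≃* B)
    (a : G) (ha : a ∉ A)
    (hmal : ∀ h ∈ A, a⁻¹ * h * a ∈ B → h = 1) :
    ∃ f : FreeGroup Bool →* HNNExtension G A B φ, Function.Injective f ∧
      ∀ x, f x ∈ Subgroup.closure
        ({HNNExtension.of a, HNNExtension.t} : Set (HNNExtension G A B φ)) := by
  classical
  set S : Subgroup (HNNExtension G A B φ) :=
    Subgroup.closure ({HNNExtension.of a, HNNExtension.t} : Set (HNNExtension G A B φ)) with hS
  have haS : HNNExtension.of (φ := φ) a ∈ S :=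
    Subgroup.subset_closure (Set.mem_insert _ _)
  have htS : (HNNExtension.t : HNNExtension G A B φ) ∈ S :=
    Subgroup.subset_closure (Set.mem_insert_iff.mpr (Or.inr rfl))
  obtain ⟨d, hdB, hdS⟩ : ∃ d : G, d ∉ B ∧ HNNExtension.of (φ := φ) d ∈ S := by
    by_cases haB : a ∈ B
    · refine ⟨a⁻¹ * ↑(φ.symm ⟨a, haB⟩) * a, ?_, ?_⟩
      · intro hmem
        have h1 := hmal ↑(φ.symm ⟨a, haB⟩) (φ.symm ⟨a, haB⟩).2 hmem
        have h2 : φ.symm ⟨a, haB⟩ = 1 := Subtype.ext (by simpa using h1)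
        have h3 : (⟨a, haB⟩ : B) = 1 := by
          rw [← φ.apply_symm_apply ⟨a, haB⟩, h2, map_one]
        have h4 : a = 1 := Subtype.ext_iff.mp h3
        exact ha (h4 ▸ A.one_mem)
      · have hconj : HNNExtension.of (φ := φ) ↑(φ.symm ⟨a, haB⟩)
            = HNNExtension.t⁻¹ * HNNExtension.of a * HNNExtension.t :=
          HNNExtension.equiv_symm_eq_conj (φ := φ) ⟨a, haB⟩
        rw [map_mul, map_mul, hconj, map_inv]
        exact S.mul_mem (S.mul_mem (S.inv_mem haS)
          (S.mul_mem (S.mul_mem (S.inv_mem htS) haS) htS)) haS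
    · exact ⟨a, haB, haS⟩
  refine ⟨FreeGroup.lift (s11gen φ a d), ?_, ?_⟩
  · rw [injective_iff_map_eq_one]
    intro x hx
    by_contra hne
    exact s11nontriv φ a d ha hdB x hne hx
  · intro x
    have hrle : (FreeGroup.lift (s11gen φ a d)).range ≤ S := by
      apply FreeGroup.range_lift_le
      rintro _ ⟨b, rfl⟩
      cases b
      · show HNNExtension.of d * (HNNExtension.t * HNNExtension.t * HNNExtension.of a) ∈ S
        exact S.mul_mem hdS (S.mul_mem (S.mul_mem htS htS) haS)
      · exact S.mul_mem htS htS
    exact hrle ⟨x, rfl⟩
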